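/- Let s ≥ m be positive integers, and let S and X be independent ℕ-valued random variables such that: (1) S is unimodal with mode s and right-skewed, meaning P(S = s−i) ≤ P(S = s+i−1) for all 1 ≤ i ≤ s; (2) E(X) = m and the partial sums Σ_{i=1}^{k} (P(X ≤ m−i) − P(X ≥ m+i)) are non-negative for every k ∈ {1,...,m}. Then P(S ≥ s) ≥ P(S + X ≥ s + m). -/

import Mathlib

set_option linter.unusedSectionVars false
set_option linter.unusedVariables false
set_option maxHeartbeats 1000000

open MeasureTheory
open scoped ProbabilityTheory NNReal

section helpers
variable {Ω : Type*} [MeasureSpace Ω] [IsProbabilityMeasure (ℙ : Measure Ω)]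
  (Y : Ω → ℕ) (hY : Measurable Y)
include hY

lemma meas_pre (A : Set ℕ) : MeasurableSet (Y ⁻¹' A) := hY (by trivial)

lemma L_le (c : ℕ) : ℙ {ω | Y ω ≤ c} = ∑ j ∈ Finset.range (c+1), ℙ {ω | Y ω = j} := by
  have h : {ω | Y ω ≤ c} = ⋃ j ∈ Finset.range (c+1), {ω | Y ω = j} := by
    ext ω; simp [Nat.lt_succ_iff]
  rw [h, measure_biUnion_finset]
  · intro i _ j _ hij
    exact Set.disjoint_left.2 fun ω h1 h2 => hij (h1.symm.trans h2)
  · intro j _; exact meas_pre Y hY {j}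

lemma L_tail (c : ℕ) : ℙ {ω | c ≤ Y ω} = ∑' i, ℙ {ω | Y ω = c + i} := by
  have h : {ω | c ≤ Y ω} = ⋃ i : ℕ, {ω | Y ω = c + i} := by
    ext ω; simp only [Set.mem_setOf_eq, Set.mem_iUnion]
    constructor
    · intro h; exact ⟨Y ω - c, by omega⟩
    · rintro ⟨i, hi⟩; omega
  rw [h, measure_iUnion]
  · intro i j hij
    exact Set.disjoint_left.2 fun ω h1 h2 => hij (by simp at h1 h2; omega)
  · intro i; exact meas_pre Y hY {c + i}

lemma L_one : ∑' x, ℙ {ω | Y ω = x} = 1 := by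
  have := L_tail Y hY 0
  simp only [Nat.zero_le, Nat.zero_add] at this
  rw [← this]
  simp

lemma L_split (c N : ℕ) (h : c ≤ N) :
    ℙ {ω | c ≤ Y ω} = ∑ j ∈ Finset.Ico c N, ℙ {ω | Y ω = j} + ℙ {ω | N ≤ Y ω} := by
  induction N, h using Nat.le_induction with
  | base => simp
  | succ N hN ih =>
    rw [Finset.sum_Ico_succ_top hN, ih]
    have hsplit : {ω | N ≤ Y ω} = {ω | Y ω = N} ∪ {ω | N + 1 ≤ Y ω} := by
      ext ω; simp only [Set.mem_setOf_eq, Set.mem_union]; omega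
    have hd : Disjoint {ω | Y ω = N} {ω | (N+1 : ℕ) ≤ Y ω} :=
      Set.disjoint_left.2 fun ω h1 h2 => by simp at h1 h2; omega
    rw [hsplit, measure_union hd (meas_pre Y hY (Set.Ici (N+1)))]
    ring
end helpers



lemma tsum_shift (g : ℕ → ENNReal) (c : ℕ) :
    ∑' x, (if c ≤ x then g x else 0) = ∑' i, g (c + i) := by
  have hinj : Function.Injective (fun i : ℕ => c + i) := add_right_injective c
  rw [← hinj.tsum_eq (f := fun x => if c ≤ x then g x else 0)]
  · simp
  · intro x hx
    simp only [Function.mem_support, ne_eq, ite_eq_right_iff, not_forall] at hx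
    obtain ⟨hcx, -⟩ := hx
    exact ⟨x - c, show c + (x - c) = x by omega⟩

lemma tsum_tail_eq (g : ℕ → ENNReal) :
    ∑' (j : ℕ), ∑' (i : ℕ), g (j + 1 + i) = ∑' (x : ℕ), (x : ENNReal) * g x := by
  have h1 : ∀ j : ℕ, ∑' (i : ℕ), g (j + 1 + i) = ∑' x, (if j + 1 ≤ x then g x else 0) :=
    fun j => (tsum_shift g (j+1)).symm
  simp_rw [h1]
  rw [ENNReal.tsum_comm]
  refine tsum_congr fun x => ?_
  rw [tsum_eq_sum (s := Finset.range x) (by intro b hb; simp at hb ⊢; omega)]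
  have : ∀ b ∈ Finset.range x, (if b + 1 ≤ x then g x else 0) = g x := by
    intro b hb; simp at hb ⊢; omega
  rw [Finset.sum_congr rfl this, Finset.sum_const, Finset.card_range, nsmul_eq_mul]

open Finset


lemma abel_sum (n : ℕ) (u v : ℕ → ℝ) :
    ∑ j ∈ range (n+1), u j * (∑ t ∈ range j, v t)
      = ∑ t ∈ range n, v t * (∑ j ∈ Icc (t+1) n, u j) := by
  induction n with
  | zero => simp
  | succ n ih =>
    have h1 : ∀ t ∈ range n, v t * (∑ j ∈ Icc (t+1) (n+1), u j)
        = v t * (∑ j ∈ Icc (t+1) n, u j) + v t * u (n+1) := by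
      intro t ht
      simp only [mem_range] at ht
      rw [Finset.sum_Icc_succ_top (by omega : t + 1 ≤ n + 1), mul_add]
    have hR : ∑ t ∈ range (n+1), v t * (∑ j ∈ Icc (t+1) (n+1), u j)
        = ∑ t ∈ range n, v t * (∑ j ∈ Icc (t+1) n, u j) + u (n+1) * ∑ t ∈ range (n+1), v t := by
      rw [sum_range_succ, sum_congr rfl h1, sum_add_distrib, Icc_self, sum_singleton,
        mul_sum, sum_range_succ,
        Finset.sum_congr rfl (fun t _ => mul_comm (v t) (u (n+1)))]
      ring
    rw [hR, ← ih, sum_range_succ]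

lemma abel_le (n : ℕ) (d f g : ℕ → ℝ) (hd : ∀ i j, i ≤ j → j < n → d j ≤ d i)
    (hd0 : ∀ i, i < n → 0 ≤ d i)
    (h : ∀ k, k ≤ n → ∑ t ∈ range k, f t ≤ ∑ t ∈ range k, g t) :
    ∑ t ∈ range n, d t * f t ≤ ∑ t ∈ range n, d t * g t := by
  induction n generalizing d with
  | zero => simp
  | succ n ih =>
    have key : ∀ F : ℕ → ℝ, ∑ t ∈ range (n+1), d t * F t
        = ∑ t ∈ range n, (d t - d n) * F t + d n * ∑ t ∈ range (n+1), F t := by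
      intro F
      rw [mul_sum, sum_range_succ, sum_range_succ]
      have : ∑ t ∈ range n, d t * F t = ∑ t ∈ range n, ((d t - d n) * F t + d n * F t) :=
        sum_congr rfl fun t _ => by ring
      rw [this, sum_add_distrib]
      ring
    rw [key f, key g]
    have hdn : 0 ≤ d n := hd0 n (by omega)
    have t1 : ∑ t ∈ range n, (d t - d n) * f t ≤ ∑ t ∈ range n, (d t - d n) * g t := by
      refine ih (fun t => d t - d n) (fun i j hij hj => ?_) (fun i hi => ?_)
        (fun k hk => h k (by omega))
      · have := hd i j hij (by omega); linarith
      · have := hd i n (by omega) (by omega); linarith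
    have t2 : d n * ∑ t ∈ range (n+1), f t ≤ d n * ∑ t ∈ range (n+1), g t :=
      mul_le_mul_of_nonneg_left (h (n+1) le_rfl) hdn
    linarith

lemma B_eq (p : ℕ → ℝ) (s k : ℕ) :
    ∑ j ∈ Finset.Ico (s - k) s, p j = ∑ t ∈ range s, (if t < k then p (s - 1 - t) else 0) := by
  induction k with
  | zero => simp
  | succ k ih =>
    by_cases hk : k < s
    · have h1 : s - (k+1) < s := by omega
      rw [Finset.sum_eq_sum_Ico_succ_bot h1]
      have h2 : s - (k+1) + 1 = s - k := by omega
      rw [h2, ih]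
      have h3 : ∀ t ∈ range s, (if t < k + 1 then p (s-1-t) else 0)
          = (if t < k then p (s-1-t) else 0) + (if t = k then p (s-1-t) else 0) := by
        intro t ht
        by_cases h : t < k
        · rw [if_pos (by omega : t < k + 1), if_pos h, if_neg (by omega : ¬ t = k)]; ring
        · by_cases h' : t = k
          · rw [if_pos (by omega : t < k + 1), if_neg h, if_pos h']; ring
          · rw [if_neg (by omega : ¬ t < k + 1), if_neg h, if_neg h']; ring
      rw [sum_congr rfl h3, sum_add_distrib, Finset.sum_ite_eq' (range s) k (fun t => p (s-1-t))]
      simp only [mem_range, hk, if_pos]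
      have : s - 1 - k = s - (k+1) := by omega
      rw [this]; ring
    · have h2 : s - (k+1) = s - k := by omega
      rw [h2, ih]
      refine sum_congr rfl fun t ht => ?_
      simp only [mem_range] at ht
      rw [if_pos (by omega : t < k + 1), if_pos (by omega : t < k)]

lemma main_real (s m : ℕ) (hm : 0 < m) (hsm : m ≤ s)
    (a p t Q R : ℕ → ℝ)
    (ha0 : ∀ x, 0 ≤ a x) (hp0 : ∀ j, 0 ≤ p j) (ht0 : ∀ n, 0 ≤ t n) (ht1 : ∀ n, t n ≤ 1)
    (hR0 : ∀ n, 0 ≤ R n) (hQ0 : ∀ n, 0 ≤ Q n)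
    (haSum : Summable a)
    (ht_split : ∀ c N, c ≤ N → t c = (∑ j ∈ Finset.Ico c N, p j) + t N)
    (hskew : ∀ i, 1 ≤ i → i ≤ s → p (s - i) ≤ p (s + i - 1))
    (hmono : ∀ i j, i ≤ j → p (s + j) ≤ p (s + i))
    (hQ : ∀ i, i ≤ m → Q i = ∑ j ∈ Finset.Icc i m, a (m - j))
    (hR : ∀ i, R i = ∑' j, a (m + i + j))
    (hL2 : ∀ k, 1 ≤ k → k ≤ m →
      ∑ i ∈ Finset.range k, R (i+1) ≤ ∑ i ∈ Finset.range k, Q (i+1))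
    (hmean' : ∀ k, ∑ i ∈ Finset.range k, R (i+1) ≤ ∑ i ∈ Finset.range m, Q (i+1)) :
    ∑' x, a x * t (s + m - x) ≤ ∑' x, a x * t s := by
  classical
  have hsum1 : Summable (fun x => a x * t (s + m - x)) := by
    refine Summable.of_nonneg_of_le (fun x => mul_nonneg (ha0 x) (ht0 _)) (fun x => ?_) haSum
    calc a x * t (s+m-x) ≤ a x * 1 := mul_le_mul_of_nonneg_left (ht1 _) (ha0 x)
    _ = a x := mul_one _
  have hsum2 : Summable (fun x => a x * t s) := haSum.mul_right _
  rw [← sub_nonneg, ← Summable.tsum_sub hsum2 hsum1]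
  set F := fun x => a x * t s - a x * t (s + m - x) with hFdef
  have hFsum : Summable F := hsum2.sub hsum1
  rw [← Summable.sum_add_tsum_nat_add (m+1) hFsum]
  -- part 1
  have hpart1 : ∀ x ∈ range (m+1), F x = a x * (∑ u ∈ range (m - x), p (s + u)) := by
    intro x hx
    simp only [mem_range] at hx
    have hxm : x ≤ m := by omega
    have h2 : s + m - x = s + (m - x) := by omega
    have h1 := ht_split s (s + (m - x)) (by omega)
    rw [Finset.sum_Ico_eq_sum_range] at h1
    simp only [hFdef, h2, h1]
    have h3 : s + (m - x) - s = m - x := by omega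
    rw [h3]
    ring
  -- part 2
  have hpart2 : ∀ i : ℕ, F (i + (m+1))
      = - (a (i + (m+1)) * (∑ u ∈ range s, (if u < i + 1 then p (s - 1 - u) else 0))) := by
    intro i
    have h2 : s + m - (i + (m+1)) = s - (i+1) := by omega
    have h1 := ht_split (s - (i+1)) s (by omega)
    rw [B_eq] at h1
    simp only [hFdef, h2, h1]
    ring
  rw [Finset.sum_congr rfl hpart1, tsum_congr hpart2, tsum_neg, ← sub_eq_add_neg, sub_nonneg]
  -- key1 : evaluate the tsum side
  have hswap : ∀ i : ℕ, a (i+(m+1)) * (∑ u ∈ range s, (if u < i + 1 then p (s-1-u) else 0))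
      = ∑ u ∈ range s, (if u ≤ i then a (i+(m+1)) * p (s-1-u) else 0) := by
    intro i
    rw [mul_sum]
    refine sum_congr rfl fun u hu => ?_
    by_cases h : u ≤ i
    · rw [if_pos (by omega : u < i + 1), if_pos h]
    · rw [if_neg (by omega : ¬ u < i + 1), if_neg h, mul_zero]
  have hsummand : ∀ u : ℕ, Summable (fun i => if u ≤ i then a (i+(m+1)) * p (s-1-u) else 0) := by
    intro u
    refine Summable.of_nonneg_of_le (fun i => ?_) (fun i => ?_)
      (((summable_nat_add_iff (m+1)).mpr haSum).mul_right (p (s-1-u)))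
    · by_cases h : u ≤ i
      · rw [if_pos h]; exact mul_nonneg (ha0 _) (hp0 _)
      · rw [if_neg h]
    · by_cases h : u ≤ i
      · rw [if_pos h]
      · rw [if_neg h]; exact mul_nonneg (ha0 _) (hp0 _)
  have key1 : ∑' i, a (i+(m+1)) * (∑ u ∈ range s, (if u < i + 1 then p (s-1-u) else 0))
      = ∑ u ∈ range s, p (s-1-u) * R (u+1) := by
    rw [tsum_congr hswap, Summable.tsum_finsetSum (fun u _ => hsummand u)]
    refine sum_congr rfl fun u hu => ?_
    have hev := (Summable.sum_add_tsum_nat_add u (hsummand u)).symm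
    have hz : ∑ i ∈ range u, (if u ≤ i then a (i+(m+1)) * p (s-1-u) else 0) = 0 :=
      Finset.sum_eq_zero fun i hi => if_neg (by simp at hi; omega)
    rw [hz, zero_add] at hev
    rw [hev]
    have hre : ∀ j : ℕ, (if u ≤ j + u then a ((j+u)+(m+1)) * p (s-1-u) else 0)
        = a (m + (u+1) + j) * p (s-1-u) := by
      intro j
      rw [if_pos (by omega)]
      congr 2
      omega
    rw [tsum_congr hre, tsum_mul_right, hR (u+1)]
    ring
  rw [key1]
  -- key2 : evaluate the finite-sum side
  have key2 : ∑ x ∈ range (m+1), a x * (∑ u ∈ range (m - x), p (s + u))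
      = ∑ u ∈ range m, p (s + u) * Q (u+1) := by
    have hrefl := Finset.sum_range_reflect (fun x => a x * (∑ u ∈ range (m - x), p (s + u))) (m+1)
    rw [← hrefl]
    have hcongr : ∀ j ∈ range (m+1), a (m+1-1-j) * (∑ u ∈ range (m - (m+1-1-j)), p (s + u))
        = a (m-j) * (∑ u ∈ range j, p (s + u)) := by
      intro j hj
      simp only [mem_range] at hj
      have e1 : m+1-1-j = m - j := by omega
      have e2 : m - (m - j) = j := by omega
      rw [e1, e2]
    rw [Finset.sum_congr rfl hcongr, abel_sum m (fun j => a (m-j)) (fun u => p (s+u))]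
    exact sum_congr rfl fun u hu => by rw [← hQ (u+1) (by simp at hu; omega)]
  rw [key2]
  -- chain of inequalities
  have step1 : ∑ u ∈ range s, p (s-1-u) * R (u+1) ≤ ∑ u ∈ range s, p (s+u) * R (u+1) := by
    refine sum_le_sum fun u hu => ?_
    simp only [mem_range] at hu
    have hs1 := hskew (u+1) (by omega) (by omega)
    have e1 : s - (u+1) = s-1-u := by omega
    have e2 : s + (u+1) - 1 = s + u := by omega
    rw [e1, e2] at hs1
    exact mul_le_mul_of_nonneg_right hs1 (hR0 _)
  have hpartial : ∀ k, k ≤ s → ∑ u ∈ range k, R (u+1)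
      ≤ ∑ u ∈ range k, (if u < m then Q (u+1) else 0) := by
    intro k hk
    by_cases hkm : k ≤ m
    · have he : ∑ u ∈ range k, (if u < m then Q (u+1) else 0) = ∑ u ∈ range k, Q (u+1) :=
        sum_congr rfl fun u hu => if_pos (by simp at hu; omega)
      rw [he]
      rcases Nat.eq_zero_or_pos k with h0 | h1
      · simp [h0]
      · exact hL2 k h1 hkm
    · have he : ∑ u ∈ range k, (if u < m then Q (u+1) else 0) = ∑ u ∈ range m, Q (u+1) := by
        rw [Finset.range_eq_Ico, ← Finset.sum_Ico_consecutive _ (Nat.zero_le m) (by omega : m ≤ k)]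
        have hz : ∑ u ∈ Finset.Ico m k, (if u < m then Q (u+1) else 0) = 0 :=
          Finset.sum_eq_zero fun u hu => if_neg (by simp at hu; omega)
        rw [hz, add_zero, ← Finset.range_eq_Ico]
        exact sum_congr rfl fun u hu => if_pos (by simp at hu; omega)
      rw [he]
      exact hmean' k
  have step2 : ∑ u ∈ range s, p (s+u) * R (u+1)
      ≤ ∑ u ∈ range s, p (s+u) * (if u < m then Q (u+1) else 0) := by
    refine abel_le s (fun u => p (s+u)) (fun u => R (u+1)) (fun u => if u < m then Q (u+1) else 0)
      (fun i j hij hj => hmono i j hij) (fun i hi => hp0 _) hpartial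
  have step3 : ∑ u ∈ range s, p (s+u) * (if u < m then Q (u+1) else 0)
      = ∑ u ∈ range m, p (s+u) * Q (u+1) := by
    rw [Finset.range_eq_Ico, ← Finset.sum_Ico_consecutive _ (Nat.zero_le m) (by omega : m ≤ s)]
    have hz : ∑ u ∈ Finset.Ico m s, p (s+u) * (if u < m then Q (u+1) else 0) = 0 :=
      Finset.sum_eq_zero fun u hu => by rw [if_neg (by simp at hu; omega), mul_zero]
    rw [hz, add_zero, ← Finset.range_eq_Ico]
    exact sum_congr rfl fun u hu => by rw [if_pos (by simp at hu; omega)]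
  linarith


section mean
variable {Ω : Type*} [MeasureSpace Ω] [IsProbabilityMeasure (ℙ : Measure Ω)]

lemma L_lint (Y : Ω → ℕ) (hY : Measurable Y) :
    ∫⁻ ω, (Y ω : ENNReal) ∂ℙ = ∑' (x : ℕ), (x : ENNReal) * ℙ {ω | Y ω = x} := by
  have hmf : Measurable (fun n : ℕ => (n : ENNReal)) := measurable_from_top
  rw [← lintegral_map hmf hY, lintegral_countable']
  refine tsum_congr fun x => ?_
  rw [Measure.map_apply hY (by trivial)]
  rfl

lemma L_mean (Y : Ω → ℕ) (hY : Measurable Y) (hint : Integrable (fun ω => (Y ω : ℝ)) ℙ) :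
    ∑' (x : ℕ), (x : ENNReal) * ℙ {ω | Y ω = x} = ENNReal.ofReal (∫ ω, (Y ω : ℝ)) := by
  rw [← L_lint Y hY]
  have h1 : ∫ ω, (Y ω : ℝ) ∂ℙ = (∫⁻ ω, ENNReal.ofReal ((Y ω : ℝ)) ∂ℙ).toReal :=
    integral_eq_lintegral_of_nonneg_ae (Filter.Eventually.of_forall fun ω => by positivity)
      hint.aestronglyMeasurable
  have h2 : ∀ ω : Ω, ENNReal.ofReal ((Y ω : ℝ)) = (Y ω : ENNReal) := fun ω => ENNReal.ofReal_natCast _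
  simp_rw [h2] at h1
  have hfin : ∫⁻ ω, (Y ω : ENNReal) ∂ℙ ≠ ⊤ := by
    have hfi := hint.2
    rw [HasFiniteIntegral] at hfi
    have heq : ∀ ω : Ω, ‖(Y ω : ℝ)‖ₑ = (Y ω : ENNReal) := by
      intro ω
      simp [Real.nnnorm_natCast]
    simp_rw [heq] at hfi
    exact hfi.ne
  rw [h1, ENNReal.ofReal_toReal hfin]
end mean
open Finset

theorem stmt3 {Ω : Type*} [MeasureSpace Ω] [IsProbabilityMeasure (ℙ : Measure Ω)]
    (S X : Ω → ℕ) (hS : Measurable S) (hX : Measurable X)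
    (hindep : ProbabilityTheory.IndepFun S X ℙ)
    (s m : ℕ) (hm : 0 < m) (hsm : m ≤ s)
    (hmono₁ : ∀ i j : ℕ, i ≤ j → j ≤ s → ℙ {ω | S ω = i} ≤ ℙ {ω | S ω = j})
    (hmono₂ : ∀ i j : ℕ, s ≤ i → i ≤ j → ℙ {ω | S ω = j} ≤ ℙ {ω | S ω = i})
    (hskew : ∀ i ∈ Finset.Icc 1 s, ℙ {ω | S ω = s - i} ≤ ℙ {ω | S ω = s + i - 1})
    (hint : Integrable (fun ω => (X ω : ℝ))) (hmean : (∫ ω, (X ω : ℝ)) = m)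
    (hL2 : ∀ k ∈ Finset.Icc 1 m, 0 ≤ ∑ i ∈ Finset.Icc 1 k,
      ((ℙ {ω | X ω ≤ m - i}).toReal - (ℙ {ω | m + i ≤ X ω}).toReal)) :
    ℙ {ω | s + m ≤ S ω + X ω} ≤ ℙ {ω | s ≤ S ω} := by
  classical
  have hone : ∑' x, ℙ {ω | X ω = x} = 1 := L_one X hX
  have hdec : ℙ {ω | s + m ≤ S ω + X ω}
      = ∑' x, ℙ {ω | X ω = x} * ℙ {ω | s + m - x ≤ S ω} := by
    have hU : {ω | s + m ≤ S ω + X ω}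
        = ⋃ x : ℕ, ({ω | X ω = x} ∩ {ω | s + m - x ≤ S ω}) := by
      ext ω
      simp only [Set.mem_setOf_eq, Set.mem_iUnion, Set.mem_inter_iff]
      constructor
      · intro h; exact ⟨X ω, rfl, by omega⟩
      · rintro ⟨x, hx, h⟩; omega
    rw [hU, measure_iUnion]
    · refine tsum_congr fun x => ?_
      have hi := hindep.measure_inter_preimage_eq_mul (Set.Ici (s+m-x)) {x}
        (by trivial) (by trivial)
      have hset : {ω | X ω = x} ∩ {ω | s + m - x ≤ S ω}
          = S ⁻¹' Set.Ici (s+m-x) ∩ X ⁻¹' {x} := by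
        rw [Set.inter_comm]; rfl
      rw [hset, hi, mul_comm]; rfl
    · intro i j hij
      refine Set.disjoint_left.2 fun ω h1 h2 => hij ?_
      exact (h1.1).symm.trans h2.1
    · intro x
      exact (meas_pre X hX {x}).inter (meas_pre S hS (Set.Ici (s+m-x)))
  have hrhs : ℙ {ω | s ≤ S ω} = ∑' x, ℙ {ω | X ω = x} * ℙ {ω | s ≤ S ω} := by
    rw [ENNReal.tsum_mul_right, hone, one_mul]
  rw [hdec, hrhs]
  have hle1 : ∀ f : ℕ → Set Ω, (∑' x, ℙ {ω | X ω = x} * ℙ (f x)) ≤ 1 := by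
    intro f
    calc ∑' x, ℙ {ω | X ω = x} * ℙ (f x) ≤ ∑' x, ℙ {ω | X ω = x} := by
          refine ENNReal.tsum_le_tsum fun x => ?_
          calc ℙ {ω | X ω = x} * ℙ (f x) ≤ ℙ {ω | X ω = x} * 1 :=
                mul_le_mul_right prob_le_one _
          _ = ℙ {ω | X ω = x} := mul_one _
    _ = 1 := hone
  have hfin1 : (∑' x, ℙ {ω | X ω = x} * ℙ {ω | s + m - x ≤ S ω}) ≠ ⊤ :=
    ne_top_of_le_ne_top ENNReal.one_ne_top (hle1 _)
  have hfin2 : (∑' x, ℙ {ω | X ω = x} * ℙ {ω | s ≤ S ω}) ≠ ⊤ :=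
    ne_top_of_le_ne_top ENNReal.one_ne_top (hle1 _)
  rw [← ENNReal.toReal_le_toReal hfin1 hfin2,
    ENNReal.tsum_toReal_eq (fun x => ENNReal.mul_ne_top (measure_ne_top _ _) (measure_ne_top _ _)),
    ENNReal.tsum_toReal_eq (fun x => ENNReal.mul_ne_top (measure_ne_top _ _) (measure_ne_top _ _))]
  simp only [ENNReal.toReal_mul]
  -- complement identity
  have hcomp : ∀ c : ℕ, (ℙ {ω | X ω ≤ c}).toReal = 1 - (ℙ {ω | c+1 ≤ X ω}).toReal := by
    intro c
    have hd : Disjoint {ω | X ω ≤ c} {ω | c+1 ≤ X ω} :=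
      Set.disjoint_left.2 fun ω h1 h2 => by simp only [Set.mem_setOf_eq] at h1 h2; omega
    have hu : {ω | X ω ≤ c} ∪ {ω | c+1 ≤ X ω} = Set.univ := by
      ext ω; simp only [Set.mem_setOf_eq, Set.mem_union, Set.mem_univ, iff_true]; omega
    have h2 := measure_union (μ := ℙ) hd (meas_pre X hX (Set.Ici (c+1)))
    rw [hu, measure_univ] at h2
    have h3 := congrArg ENNReal.toReal h2
    rw [ENNReal.toReal_one, ENNReal.toReal_add (measure_ne_top _ _) (measure_ne_top _ _)] at h3
    linarith
  -- mean facts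
  have hEgsum : ∑' j : ℕ, ℙ {ω | j+1 ≤ X ω} = ENNReal.ofReal m := by
    have h1 : ∀ j : ℕ, ℙ {ω | j+1 ≤ X ω} = ∑' i, ℙ {ω | X ω = j+1+i} :=
      fun j => L_tail X hX (j+1)
    rw [tsum_congr h1, tsum_tail_eq (fun x => ℙ {ω | X ω = x}), L_mean X hX hint, hmean]
  have hgsum : Summable (fun j : ℕ => (ℙ {ω | j+1 ≤ X ω}).toReal) :=
    ENNReal.summable_toReal (by rw [hEgsum]; exact ENNReal.ofReal_ne_top)
  have hgtot : ∑' j : ℕ, (ℙ {ω | j+1 ≤ X ω}).toReal = m := by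
    rw [← ENNReal.tsum_toReal_eq (fun j => measure_ne_top _ _), hEgsum,
      ENNReal.toReal_ofReal (by positivity)]
  -- apply the real lemma
  refine main_real s m hm hsm (fun x => (ℙ {ω | X ω = x}).toReal)
    (fun j => (ℙ {ω | S ω = j}).toReal) (fun n => (ℙ {ω | n ≤ S ω}).toReal)
    (fun i => (ℙ {ω | X ω ≤ m - i}).toReal) (fun i => (ℙ {ω | m + i ≤ X ω}).toReal)
    (fun x => ENNReal.toReal_nonneg) (fun j => ENNReal.toReal_nonneg)
    (fun n => ENNReal.toReal_nonneg) ?ht1 (fun n => ENNReal.toReal_nonneg)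
    (fun n => ENNReal.toReal_nonneg) ?haSum ?htsplit ?hskewR ?hmonoR ?hQ ?hR ?hL2R ?hmeanR
  case ht1 =>
    intro n
    have := ENNReal.toReal_mono ENNReal.one_ne_top (prob_le_one (μ := ℙ) (s := {ω | n ≤ S ω}))
    simpa using this
  case haSum =>
    exact ENNReal.summable_toReal (by rw [hone]; exact ENNReal.one_ne_top)
  case htsplit =>
    intro c N hcN
    have h1 := L_split S hS c N hcN
    have h2 := congrArg ENNReal.toReal h1
    rw [ENNReal.toReal_add (by exact (ENNReal.sum_lt_top.mpr (fun j _ => measure_lt_top _ _)).ne)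
      (measure_ne_top _ _), ENNReal.toReal_sum (fun j _ => measure_ne_top _ _)] at h2
    exact h2
  case hskewR =>
    intro i h1 h2
    exact ENNReal.toReal_mono (measure_ne_top _ _) (hskew i (Finset.mem_Icc.mpr ⟨h1, h2⟩))
  case hmonoR =>
    intro i j hij
    exact ENNReal.toReal_mono (measure_ne_top _ _) (hmono₂ (s+i) (s+j) (by omega) (by omega))
  case hQ =>
    intro i him
    have h1 := L_le X hX (m - i)
    have h2 := congrArg ENNReal.toReal h1
    rw [ENNReal.toReal_sum (fun j _ => measure_ne_top _ _)] at h2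
    rw [h2]
    have h3 : ∑ j ∈ Icc i m, (ℙ {ω | X ω = m - j}).toReal
        = ∑ w ∈ range (m-i+1), (ℙ {ω | X ω = m - (i+w)}).toReal := by
      rw [← Finset.Ico_add_one_right_eq_Icc, Finset.sum_Ico_eq_sum_range,
        show m+1-i = m-i+1 by omega]
    rw [h3]
    have h4 : ∀ w ∈ range (m-i+1), (ℙ {ω | X ω = m - (i+w)}).toReal
        = (fun v => (ℙ {ω | X ω = v}).toReal) (m-i+1-1-w) := by
      intro w hw
      simp only [mem_range] at hw
      have he : m - (i+w) = m-i+1-1-w := by omega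
      rw [he]
    rw [Finset.sum_congr rfl h4]
    exact (Finset.sum_range_reflect (fun v => (ℙ {ω | X ω = v}).toReal) (m-i+1)).symm
  case hR =>
    intro i
    have h1 := L_tail X hX (m + i)
    have h2 := congrArg ENNReal.toReal h1
    rw [ENNReal.tsum_toReal_eq (fun j => measure_ne_top _ _)] at h2
    exact h2
  case hL2R =>
    intro k h1 hk
    have h2 := hL2 k (Finset.mem_Icc.mpr ⟨h1, hk⟩)
    rw [← Finset.Ico_add_one_right_eq_Icc, Finset.sum_Ico_eq_sum_range] at h2
    have h3 : k + 1 - 1 = k := by omega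
    rw [h3, Finset.sum_sub_distrib] at h2
    have h4 : ∀ (f : ℕ → ℝ), ∑ i ∈ range k, f (1 + i) = ∑ i ∈ range k, f (i + 1) :=
      fun f => sum_congr rfl fun i _ => by rw [Nat.add_comm 1 i]
    rw [h4 (fun i => (ℙ {ω | X ω ≤ m - i}).toReal),
      h4 (fun i => (ℙ {ω | m + i ≤ X ω}).toReal)] at h2
    linarith
  case hmeanR =>
    intro k
    have hQsum : ∑ u ∈ range m, (ℙ {ω | X ω ≤ m - (u+1)}).toReal
        = ∑' j : ℕ, (ℙ {ω | (j+m)+1 ≤ X ω}).toReal := by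
      have hQg : ∀ u ∈ range m, (ℙ {ω | X ω ≤ m - (u+1)}).toReal
          = 1 - (ℙ {ω | (m-1-u)+1 ≤ X ω}).toReal := by
        intro u hu
        simp only [mem_range] at hu
        rw [hcomp (m - (u+1)), show m - (u+1) = m-1-u by omega]
      rw [sum_congr rfl hQg, Finset.sum_sub_distrib, sum_const, card_range, nsmul_eq_mul,
        mul_one, Finset.sum_range_reflect (fun j => (ℙ {ω | j+1 ≤ X ω}).toReal) m]
      have htail := Summable.sum_add_tsum_nat_add m hgsum
      rw [hgtot] at htail
      linarith
    have hRle : ∑ u ∈ range k, (ℙ {ω | m + (u+1) ≤ X ω}).toReal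
        ≤ ∑' j : ℕ, (ℙ {ω | (j+m)+1 ≤ X ω}).toReal := by
      have he : ∀ u ∈ range k, (ℙ {ω | m + (u+1) ≤ X ω}).toReal
          = (ℙ {ω | (u+m)+1 ≤ X ω}).toReal := by
        intro u hu
        have hsets : {ω | m + (u+1) ≤ X ω} = {ω | (u+m)+1 ≤ X ω} := by
          ext ω; simp only [Set.mem_setOf_eq]; omega
        rw [hsets]
      rw [sum_congr rfl he]
      exact Summable.sum_le_tsum (range k) (fun j _ => ENNReal.toReal_nonneg)
        ((summable_nat_add_iff m).mpr hgsum)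
    calc ∑ u ∈ range k, (ℙ {ω | m + (u+1) ≤ X ω}).toReal
        ≤ ∑' j : ℕ, (ℙ {ω | (j+m)+1 ≤ X ω}).toReal := hRle
    _ = ∑ u ∈ range m, (ℙ {ω | X ω ≤ m - (u+1)}).toReal := hQsum.symm
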